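/- Let H be an infinite-dimensional complex Hilbert space, X a closed subspace with dim X and codim X infinite, and A, B closed hyperplanes of X (i.e., closed subspaces of X of codimension 1 in X). Then A and B are ortho-adjacent (A ∩ B has codimension 1 in both A and B, and A, B are compatible) if and only if the 1-dimensional subspaces A^⊥ ∩ X and B^⊥ ∩ X are orthogonal. -/

import Mathlib

set_option linter.unusedSectionVars false

variable {H : Type} [NormedAddCommGroup H] [InnerProductSpace ℂ H] [CompleteSpace H]

/-- Two closed subspaces are compatible if there is an orthonormal basis of `H`
such that each of them is the closed span of a subset of that basis. -/
def Compatible (X Y : Submodule ℂ H) : Prop :=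
  ∃ (ι : Type) (b : HilbertBasis ι ℂ H) (S T : Set ι),
    X = (Submodule.span ℂ (⇑b '' S)).topologicalClosure ∧
    Y = (Submodule.span ℂ (⇑b '' T)).topologicalClosure

open Submodule Set
open scoped InnerProductSpace


open Submodule Set
open scoped InnerProductSpace

variable {H : Type} [NormedAddCommGroup H] [InnerProductSpace ℂ H] [CompleteSpace H]

/-- L1: membership in closed span of a sub-family of a Hilbert basis. -/
lemma mem_closureSpan_iff {ι : Type} (b : HilbertBasis ι ℂ H) (S : Set ι) (v : H) :
    v ∈ (Submodule.span ℂ (⇑b '' S)).topologicalClosure ↔ ∀ i ∉ S, ⟪b i, v⟫_ℂ = 0 := by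
  constructor
  · intro hv i hi
    have hker : (Submodule.span ℂ (⇑b '' S)) ≤ (innerSL ℂ (b i)).ker := by
      rw [Submodule.span_le]
      rintro _ ⟨j, hj, rfl⟩
      have : i ≠ j := fun h => hi (h ▸ hj)
      simpa [LinearMap.mem_ker] using b.orthonormal.2 this
    have hcl : (Submodule.span ℂ (⇑b '' S)).topologicalClosure ≤
        (innerSL ℂ (b i)).ker :=
      (Submodule.span ℂ (⇑b '' S)).topologicalClosure_minimal hker
        (ContinuousLinearMap.isClosed_ker _)
    simpa using hcl hv
  · intro hv
    have hsum : HasSum (fun i => b.repr v i • b i) v := b.hasSum_repr v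
    have : v ∈ closure ((Submodule.span ℂ (⇑b '' S)) : Set H) := by
      refine mem_closure_of_tendsto hsum (Filter.Eventually.of_forall fun s => ?_)
      refine Submodule.sum_mem _ fun i _ => ?_
      by_cases hi : i ∈ S
      · exact Submodule.smul_mem _ _ (Submodule.subset_span ⟨i, hi, rfl⟩)
      · rw [b.repr_apply_apply, hv i hi, zero_smul]
        exact Submodule.zero_mem _
    rwa [← Submodule.topologicalClosure_coe] at this

/-- L5: a normalized generator of a 1-dimensional subspace. -/
lemma exists_unit_gen (K : Submodule ℂ H) (hK : Module.finrank ℂ K = 1) :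
    ∃ v : H, v ∈ K ∧ ‖v‖ = 1 ∧ ∀ w ∈ K, ∃ c : ℂ, w = c • v := by
  obtain ⟨v₀, hv₀, hgen⟩ := finrank_eq_one_iff'.mp hK
  have hv₀n : ‖(v₀ : H)‖ ≠ 0 := by
    simpa [norm_eq_zero] using fun h : (v₀ : H) = 0 => hv₀ (Subtype.ext h)
  refine ⟨(‖(v₀ : H)‖ : ℂ)⁻¹ • (v₀ : H), K.smul_mem _ v₀.2, ?_, ?_⟩
  · rw [norm_smul]
    simp [hv₀n]
  · intro w hw
    obtain ⟨c, hc⟩ := hgen ⟨w, hw⟩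
    refine ⟨c * ‖(v₀ : H)‖, ?_⟩
    have h1 : w = c • (v₀ : H) := congrArg Subtype.val hc.symm
    rw [h1, smul_smul]
    have h2 : (c * (‖(v₀ : H)‖ : ℂ)) * (‖(v₀ : H)‖ : ℂ)⁻¹ = c := by
      have hc0 : (‖(v₀ : H)‖ : ℂ) ≠ 0 := by exact_mod_cast hv₀n
      field_simp
    rw [h2]

/-- L4: a Hilbert basis of a closed subspace spans it, seen in the ambient space. -/
lemma closure_span_range_subtype (K : Submodule ℂ H) (hK : IsClosed (K : Set H))
    {κ : Type} (bK : HilbertBasis κ ℂ ↥K) :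
    (Submodule.span ℂ (Set.range (K.subtype ∘ ⇑bK))).topologicalClosure = K := by
  apply le_antisymm
  · refine Submodule.topologicalClosure_minimal _ ?_ hK
    rw [Submodule.span_le]
    rintro _ ⟨i, rfl⟩
    exact (bK i).2
  · intro x hx
    have h1 : (⟨x, hx⟩ : ↥K) ∈ (Submodule.span ℂ (Set.range ⇑bK)).topologicalClosure := by
      rw [bK.dense_span]; trivial
    have h2 : (⟨x, hx⟩ : ↥K) ∈ closure ((Submodule.span ℂ (Set.range ⇑bK)) : Set ↥K) := by
      exact h1
    have h3 : x ∈ closure (K.subtype '' ((Submodule.span ℂ (Set.range ⇑bK)) : Set ↥K)) := by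
      have := image_closure_subset_closure_image (f := (K.subtype : ↥K → H))
        (s := ((Submodule.span ℂ (Set.range ⇑bK)) : Set ↥K)) continuous_subtype_val
      exact this ⟨_, h2, rfl⟩
    rw [← Submodule.map_coe, Submodule.map_span, ← Set.range_comp] at h3
    exact h3


/-- L5': every element of a 1-dim subspace is a multiple of any fixed nonzero element. -/
lemma gen_of_mem (K : Submodule ℂ H) (hK : Module.finrank ℂ K = 1) {u : H}
    (hu : u ∈ K) (hu0 : u ≠ 0) : ∀ w ∈ K, ∃ c : ℂ, w = c • u := by
  obtain ⟨v, hvK, hvn, hgen⟩ := exists_unit_gen K hK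
  obtain ⟨cu, hcu⟩ := hgen u hu
  have hcu0 : cu ≠ 0 := by
    rintro rfl; rw [zero_smul] at hcu; exact hu0 hcu
  intro w hw
  obtain ⟨cw, hcw⟩ := hgen w hw
  refine ⟨cw / cu, ?_⟩
  rw [hcw, hcu, smul_smul]
  congr 1
  field_simp

lemma aux_fwd {ι : Type} (b : HilbertBasis ι ℂ H) (S T : Set ι) (A B : Submodule ℂ H)
    (hA_eq : A = (Submodule.span ℂ (⇑b '' S)).topologicalClosure)
    (hB_eq : B = (Submodule.span ℂ (⇑b '' T)).topologicalClosure)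
    (hW : Module.finrank ℂ ((A ⊓ B)ᗮ ⊓ A : Submodule ℂ H) = 1) :
    ∃ s, S \ T = {s} := by
  set W := (A ⊓ B)ᗮ ⊓ A with hWdef
  have claim1 : ∀ v ∈ W, ∀ i, i ∉ S \ T → ⟪b i, v⟫_ℂ = 0 := by
    rintro v ⟨hv1, hv2⟩ i hi
    by_cases hiS : i ∈ S
    · have hiT : i ∈ T := by
        by_contra hiT; exact hi ⟨hiS, hiT⟩
      have hbi : b i ∈ A ⊓ B := by
        constructor
        · rw [hA_eq]
          exact le_topologicalClosure _ (Submodule.subset_span ⟨i, hiS, rfl⟩)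
        · rw [hB_eq]
          exact le_topologicalClosure _ (Submodule.subset_span ⟨i, hiT, rfl⟩)
      exact (Submodule.mem_orthogonal _ v).mp hv1 _ hbi
    · rw [hA_eq] at hv2
      exact (mem_closureSpan_iff b S v).mp hv2 i hiS
  have claim2 : ∀ s ∈ S \ T, b s ∈ W := by
    rintro s ⟨hsS, hsT⟩
    constructor
    · refine (Submodule.mem_orthogonal _ _).mpr ?_
      rintro u ⟨-, huB⟩
      rw [← inner_eq_zero_symm]
      rw [hB_eq] at huB
      exact (mem_closureSpan_iff b T u).mp huB s hsT
    · rw [hA_eq]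
      exact le_topologicalClosure _ (Submodule.subset_span ⟨s, hsS, rfl⟩)
  obtain ⟨v, hvW, hvn, hgen⟩ := exists_unit_gen W hW
  have hne : ∃ s, s ∈ S \ T := by
    by_contra h
    push_neg at h
    have h0 : v = 0 := by
      have hs := b.hasSum_repr v
      have : ∀ i, b.repr v i • b i = 0 := by
        intro i
        rw [b.repr_apply_apply, claim1 v hvW i (h i), zero_smul]
      rw [show (fun i => b.repr v i • b i) = fun _ => (0 : H) from funext this] at hs
      exact (hs.unique hasSum_zero)
    rw [h0, norm_zero] at hvn
    exact one_ne_zero hvn.symm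
  obtain ⟨s, hs⟩ := hne
  refine ⟨s, ?_⟩
  ext s'
  simp only [Set.mem_singleton_iff]
  constructor
  · intro hs'
    by_contra hne'
    have hbs0 : b s ≠ 0 := by
      intro h
      have hn := b.orthonormal.1 s
      rw [h, norm_zero] at hn
      exact one_ne_zero hn.symm
    obtain ⟨c, hc⟩ := gen_of_mem W hW (claim2 s hs) hbs0 (b s') (claim2 s' hs')
    have horth : ⟪b s, b s'⟫_ℂ = 0 := b.orthonormal.2 (fun h => hne' h.symm)
    rw [hc, inner_smul_right] at horth
    have hbs : ⟪b s, b s⟫_ℂ = 1 := by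
      rw [inner_self_eq_norm_sq_to_K, b.orthonormal.1 s]
      norm_num
    rw [hbs, mul_one] at horth
    rw [horth, zero_smul] at hc
    have := b.orthonormal.1 s'
    rw [hc, norm_zero] at this
    exact one_ne_zero this.symm
  · rintro rfl; exact hs

lemma fwd (X A B : Submodule ℂ H) (hAX : A ≤ X) (hBX : B ≤ X)
    (hA1 : Module.finrank ℂ (Aᗮ ⊓ X : Submodule ℂ H) = 1)
    (hB1 : Module.finrank ℂ (Bᗮ ⊓ X : Submodule ℂ H) = 1)
    {ι : Type} (b : HilbertBasis ι ℂ H) (S T : Set ι)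
    (hA_eq : A = (Submodule.span ℂ (⇑b '' S)).topologicalClosure)
    (hB_eq : B = (Submodule.span ℂ (⇑b '' T)).topologicalClosure)
    (hWA : Module.finrank ℂ ((A ⊓ B)ᗮ ⊓ A : Submodule ℂ H) = 1)
    (hWB : Module.finrank ℂ ((A ⊓ B)ᗮ ⊓ B : Submodule ℂ H) = 1) :
    (Aᗮ ⊓ X).IsOrtho (Bᗮ ⊓ X) := by
  obtain ⟨s, hs⟩ := aux_fwd b S T A B hA_eq hB_eq hWA
  obtain ⟨t, ht⟩ := aux_fwd b T S B A hB_eq hA_eq (by rw [inf_comm B A]; exact hWB)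
  have hsmem : s ∈ S \ T := by rw [hs]; exact Set.mem_singleton s
  have htmem : t ∈ T \ S := by rw [ht]; exact Set.mem_singleton t
  have hts : t ≠ s := fun h => htmem.2 (h ▸ hsmem.1)
  have hbt0 : b t ≠ 0 := by
    intro h
    have hn := b.orthonormal.1 t
    rw [h, norm_zero] at hn
    exact one_ne_zero hn.symm
  have hbs0 : b s ≠ 0 := by
    intro h
    have hn := b.orthonormal.1 s
    rw [h, norm_zero] at hn
    exact one_ne_zero hn.symm
  have hbtA : b t ∈ Aᗮ ⊓ X := by
    constructor
    · refine (Submodule.mem_orthogonal _ _).mpr fun u hu => ?_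
      rw [← inner_eq_zero_symm]
      rw [hA_eq] at hu
      exact (mem_closureSpan_iff b S u).mp hu t htmem.2
    · refine hBX ?_
      rw [hB_eq]
      exact le_topologicalClosure _ (Submodule.subset_span ⟨t, htmem.1, rfl⟩)
  have hbsB : b s ∈ Bᗮ ⊓ X := by
    constructor
    · refine (Submodule.mem_orthogonal _ _).mpr fun u hu => ?_
      rw [← inner_eq_zero_symm]
      rw [hB_eq] at hu
      exact (mem_closureSpan_iff b T u).mp hu s hsmem.2
    · refine hAX ?_
      rw [hA_eq]
      exact le_topologicalClosure _ (Submodule.subset_span ⟨s, hsmem.1, rfl⟩)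
  rw [Submodule.isOrtho_iff_inner_eq]
  intro x hx y hy
  obtain ⟨c, hc⟩ := gen_of_mem _ hA1 hbtA hbt0 x hx
  obtain ⟨d, hd⟩ := gen_of_mem _ hB1 hbsB hbs0 y hy
  rw [hc, hd, inner_smul_left, inner_smul_right, b.orthonormal.2 hts, mul_zero, mul_zero]


lemma orthogonal_closure (K : Submodule ℂ H) : (K.topologicalClosure)ᗮ = Kᗮ := by
  rw [← Submodule.orthogonal_orthogonal_eq_closure]
  exact le_antisymm (Submodule.orthogonal_le (Submodule.le_orthogonal_orthogonal K))
    (Submodule.le_orthogonal_orthogonal Kᗮ)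

lemma orthonormal_sum_elim {ι κ : Type} {f : ι → H} {g : κ → H}
    (hf : Orthonormal ℂ f) (hg : Orthonormal ℂ g)
    (hfg : ∀ i j, ⟪f i, g j⟫_ℂ = 0) : Orthonormal ℂ (Sum.elim f g) := by
  constructor
  · rintro (i | j)
    · exact hf.1 i
    · exact hg.1 j
  · rintro (i | i) (j | j) hij
    · exact hf.2 (fun h => hij (h ▸ rfl))
    · exact hfg i j
    · rw [Sum.elim_inr, Sum.elim_inl, ← inner_eq_zero_symm]
      exact hfg j i
    · exact hg.2 (fun h => hij (h ▸ rfl))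

lemma char_hyperplane (X A : Submodule ℂ H) (hAc : IsClosed (A : Set H)) (hAX : A ≤ X)
    {a : H} (haM : a ∈ Aᗮ ⊓ X) (han : ‖a‖ = 1)
    (hagen : ∀ w ∈ Aᗮ ⊓ X, ∃ c : ℂ, w = c • a) :
    ∀ x, x ∈ A ↔ x ∈ X ∧ ⟪a, x⟫_ℂ = 0 := by
  haveI : CompleteSpace A := hAc.completeSpace_coe
  have haa : ⟪a, a⟫_ℂ = 1 := by
    rw [inner_self_eq_norm_sq_to_K, han]; norm_num
  intro x
  constructor
  · intro hx
    refine ⟨hAX hx, ?_⟩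
    rw [← inner_eq_zero_symm]
    exact (Submodule.mem_orthogonal _ _).mp haM.1 x hx
  · rintro ⟨hxX, hax⟩
    obtain ⟨p, hp, q, hq, hpq⟩ := A.exists_add_mem_mem_orthogonal x
    have hqX : q ∈ X := by
      have : q = x - p := by rw [hpq]; abel
      rw [this]
      exact X.sub_mem hxX (hAX hp)
    obtain ⟨γ, hγ⟩ := hagen q ⟨hq, hqX⟩
    have hap : ⟪a, p⟫_ℂ = 0 := by
      rw [← inner_eq_zero_symm]
      exact (Submodule.mem_orthogonal _ _).mp haM.1 p hp
    have : (0 : ℂ) = γ := by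
      rw [← hax, hpq, inner_add_right, hap, zero_add, hγ, inner_smul_right, haa, mul_one]
    rw [hpq, hγ, ← this, zero_smul, add_zero]
    exact hp

set_option linter.unusedSectionVars false

lemma mem_orthogonal_span_range {ι : Type} {g : ι → H} {v : H}
    (hgv : ∀ i, ⟪g i, v⟫_ℂ = 0) :
    v ∈ (Submodule.span ℂ (Set.range g))ᗮ := by
  refine (Submodule.mem_orthogonal _ _).mpr fun u hu => ?_
  induction hu using Submodule.span_induction with
  | mem x hx => obtain ⟨i, rfl⟩ := hx; exact hgv i
  | zero => exact inner_zero_left v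
  | add x y _ _ hx hy => rw [inner_add_left, hx, hy, add_zero]
  | smul c x _ hx => rw [inner_smul_left, hx, mul_zero]


lemma bwd (X A B : Submodule ℂ H) (hXc : IsClosed (X : Set H))
    (hAc : IsClosed (A : Set H)) (hBc : IsClosed (B : Set H))
    (hAX : A ≤ X) (hBX : B ≤ X)
    (hA1 : Module.finrank ℂ (Aᗮ ⊓ X : Submodule ℂ H) = 1)
    (hB1 : Module.finrank ℂ (Bᗮ ⊓ X : Submodule ℂ H) = 1)
    (horth : (Aᗮ ⊓ X).IsOrtho (Bᗮ ⊓ X)) :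
    Compatible A B ∧
      Module.finrank ℂ ((A ⊓ B)ᗮ ⊓ A : Submodule ℂ H) = 1 ∧
      Module.finrank ℂ ((A ⊓ B)ᗮ ⊓ B : Submodule ℂ H) = 1 := by
  obtain ⟨a, haM, han, hagen⟩ := exists_unit_gen _ hA1
  obtain ⟨b₀, hbM, hbn, hbgen⟩ := exists_unit_gen _ hB1
  have hab : ⟪a, b₀⟫_ℂ = 0 := Submodule.isOrtho_iff_inner_eq.mp horth a haM b₀ hbM
  have hba : ⟪b₀, a⟫_ℂ = 0 := by rw [← inner_eq_zero_symm]; exact hab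
  have haa : ⟪a, a⟫_ℂ = 1 := by rw [inner_self_eq_norm_sq_to_K, han]; norm_num
  have hbb : ⟪b₀, b₀⟫_ℂ = 1 := by rw [inner_self_eq_norm_sq_to_K, hbn]; norm_num
  have ha0 : a ≠ 0 := by intro h; rw [h, norm_zero] at han; exact one_ne_zero han.symm
  have hb0 : b₀ ≠ 0 := by intro h; rw [h, norm_zero] at hbn; exact one_ne_zero hbn.symm
  have hAchar := char_hyperplane X A hAc hAX haM han hagen
  have hBchar := char_hyperplane X B hBc hBX hbM hbn hbgen
  have hbA : b₀ ∈ A := (hAchar b₀).mpr ⟨hbM.2, hab⟩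
  have haB : a ∈ B := (hBchar a).mpr ⟨haM.2, hba⟩
  have hdecA : ∀ x ∈ A, x - ⟪b₀, x⟫_ℂ • b₀ ∈ A ⊓ B := by
    intro x hx
    refine ⟨A.sub_mem hx (A.smul_mem _ hbA),
      (hBchar _).mpr ⟨X.sub_mem (hAX hx) (X.smul_mem _ hbM.2), ?_⟩⟩
    rw [inner_sub_right, inner_smul_right, hbb, mul_one, sub_self]
  have hdecB : ∀ x ∈ B, x - ⟪a, x⟫_ℂ • a ∈ A ⊓ B := by
    intro x hx
    refine ⟨(hAchar _).mpr ⟨X.sub_mem (hBX hx) (X.smul_mem _ haM.2), ?_⟩,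
      B.sub_mem hx (B.smul_mem _ haB)⟩
    rw [inner_sub_right, inner_smul_right, haa, mul_one, sub_self]
  have hWA : ((A ⊓ B)ᗮ ⊓ A : Submodule ℂ H) = Submodule.span ℂ {b₀} := by
    apply le_antisymm
    · rintro v ⟨hv1, hv2⟩
      have hc := hdecA v hv2
      have h1 : ⟪v - ⟪b₀, v⟫_ℂ • b₀, v⟫_ℂ = 0 := (Submodule.mem_orthogonal _ _).mp hv1 _ hc
      have h2 : ⟪v - ⟪b₀, v⟫_ℂ • b₀, b₀⟫_ℂ = 0 :=
        (Submodule.mem_orthogonal _ _).mp hbM.1 _ hc.2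
      have h3 : ⟪v - ⟪b₀, v⟫_ℂ • b₀, v - ⟪b₀, v⟫_ℂ • b₀⟫_ℂ = 0 := by
        rw [inner_sub_right, h1, inner_smul_right, h2, mul_zero, zero_sub, neg_zero]
      have h4 : v = ⟪b₀, v⟫_ℂ • b₀ := by
        have := inner_self_eq_zero.mp h3
        rwa [sub_eq_zero] at this
      rw [h4]
      exact Submodule.smul_mem _ _ (Submodule.mem_span_singleton_self b₀)
    · rw [Submodule.span_singleton_le_iff_mem]
      refine ⟨(Submodule.mem_orthogonal _ _).mpr ?_, hbA⟩
      rintro u ⟨-, huB⟩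
      exact (Submodule.mem_orthogonal _ _).mp hbM.1 u huB
  have hWB : ((A ⊓ B)ᗮ ⊓ B : Submodule ℂ H) = Submodule.span ℂ {a} := by
    apply le_antisymm
    · rintro v ⟨hv1, hv2⟩
      have hc := hdecB v hv2
      have h1 : ⟪v - ⟪a, v⟫_ℂ • a, v⟫_ℂ = 0 := (Submodule.mem_orthogonal _ _).mp hv1 _ hc
      have h2 : ⟪v - ⟪a, v⟫_ℂ • a, a⟫_ℂ = 0 :=
        (Submodule.mem_orthogonal _ _).mp haM.1 _ hc.1
      have h3 : ⟪v - ⟪a, v⟫_ℂ • a, v - ⟪a, v⟫_ℂ • a⟫_ℂ = 0 := by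
        rw [inner_sub_right, h1, inner_smul_right, h2, mul_zero, zero_sub, neg_zero]
      have h4 : v = ⟪a, v⟫_ℂ • a := by
        have := inner_self_eq_zero.mp h3
        rwa [sub_eq_zero] at this
      rw [h4]
      exact Submodule.smul_mem _ _ (Submodule.mem_span_singleton_self a)
    · rw [Submodule.span_singleton_le_iff_mem]
      refine ⟨(Submodule.mem_orthogonal _ _).mpr ?_, haB⟩
      rintro u ⟨huA, -⟩
      exact (Submodule.mem_orthogonal _ _).mp haM.1 u huA
  refine ⟨?_, by rw [hWA]; exact finrank_span_singleton hb0,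
    by rw [hWB]; exact finrank_span_singleton ha0⟩
  -- construct a common Hilbert basis
  have hCc : IsClosed ((A ⊓ B : Submodule ℂ H) : Set H) := by
    rw [Submodule.coe_inf]
    exact hAc.inter hBc
  haveI : CompleteSpace (A ⊓ B : Submodule ℂ H) := hCc.completeSpace_coe
  obtain ⟨wC, bC, hbC⟩ := exists_hilbertBasis ℂ ↥(A ⊓ B : Submodule ℂ H)
  obtain ⟨wP, bP, hbP⟩ := exists_hilbertBasis ℂ ↥(Xᗮ : Submodule ℂ H)
  set fC : wC → H := (A ⊓ B).subtype ∘ ⇑bC with hfC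
  set fP : wP → H := Xᗮ.subtype ∘ ⇑bP with hfP
  set f : (↥wC ⊕ ↥wP) ⊕ Bool → H :=
    Sum.elim (Sum.elim fC fP) (fun t => if t then a else b₀) with hf
  have hfC_mem : ∀ i, fC i ∈ A ⊓ B := fun i => (bC i).2
  have hfP_mem : ∀ i, fP i ∈ Xᗮ := fun i => (bP i).2
  have honC : Orthonormal ℂ fC := bC.orthonormal.comp_linearIsometry (A ⊓ B).subtypeₗᵢ
  have honP : Orthonormal ℂ fP := bP.orthonormal.comp_linearIsometry Xᗮ.subtypeₗᵢ
  have hCP : ∀ i j, ⟪fC i, fP j⟫_ℂ = 0 := fun i j =>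
    (Submodule.mem_orthogonal _ _).mp (hfP_mem j) _ (hAX (hfC_mem i).1)
  have honCP : Orthonormal ℂ (Sum.elim fC fP) := orthonormal_sum_elim honC honP hCP
  have honab : Orthonormal ℂ (fun t : Bool => if t then a else b₀) := by
    constructor
    · intro t; cases t
      · simpa using hbn
      · simpa using han
    · intro t t' htt'
      match t, t' with
      | false, true => simpa using hba
      | true, false => simpa using hab
      | false, false => exact absurd rfl htt'
      | true, true => exact absurd rfl htt'
  have hCPab : ∀ i t, ⟪Sum.elim fC fP i, (fun t : Bool => if t then a else b₀) t⟫_ℂ = 0 := by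
    rintro (i | i) t
    · cases t
      · simpa using (Submodule.mem_orthogonal _ _).mp hbM.1 _ (hfC_mem i).2
      · simpa using (Submodule.mem_orthogonal _ _).mp haM.1 _ (hfC_mem i).1
    · cases t
      · simpa using (X.mem_orthogonal' _).mp (hfP_mem i) _ hbM.2
      · simpa using (X.mem_orthogonal' _).mp (hfP_mem i) _ haM.2
  have hon : Orthonormal ℂ f := orthonormal_sum_elim honCP honab hCPab
  have hbot : (Submodule.span ℂ (Set.range f))ᗮ = ⊥ := by
    rw [Submodule.eq_bot_iff]
    intro v hv
    have hfv : ∀ i, ⟪f i, v⟫_ℂ = 0 := fun i =>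
      (Submodule.mem_orthogonal _ _).mp hv _ (Submodule.subset_span ⟨i, rfl⟩)
    have hvC : v ∈ (A ⊓ B)ᗮ := by
      rw [← closure_span_range_subtype (A ⊓ B) hCc bC, _root_.orthogonal_closure]
      exact mem_orthogonal_span_range (fun i => hfv (Sum.inl (Sum.inl i)))
    have hvX : v ∈ X := by
      have h1 : v ∈ (Xᗮ)ᗮ := by
        rw [← closure_span_range_subtype Xᗮ X.isClosed_orthogonal bP, _root_.orthogonal_closure]
        exact mem_orthogonal_span_range (fun i => hfv (Sum.inl (Sum.inr i)))
      rwa [X.orthogonal_orthogonal_eq_closure, hXc.submodule_topologicalClosure_eq] at h1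
    have hva : ⟪a, v⟫_ℂ = 0 := hfv (Sum.inr true)
    have hvb : ⟪b₀, v⟫_ℂ = 0 := hfv (Sum.inr false)
    have hvA : v ∈ A := (hAchar v).mpr ⟨hvX, hva⟩
    have hvB : v ∈ B := (hBchar v).mpr ⟨hvX, hvb⟩
    exact inner_self_eq_zero.mp ((Submodule.mem_orthogonal _ _).mp hvC v ⟨hvA, hvB⟩)
  have hdense : ⊤ ≤ (Submodule.span ℂ (Set.range f)).topologicalClosure :=
    ge_of_eq (Submodule.topologicalClosure_eq_top_iff.mpr hbot)
  set bb : HilbertBasis ((↥wC ⊕ ↥wP) ⊕ Bool) ℂ H := HilbertBasis.mk hon hdense with hbbdef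
  have hbbf : ⇑bb = f := HilbertBasis.coe_mk hon hdense
  refine ⟨(↥wC ⊕ ↥wP) ⊕ Bool, bb,
    (Sum.inl ∘ Sum.inl) '' Set.univ ∪ {Sum.inr false},
    (Sum.inl ∘ Sum.inl) '' Set.univ ∪ {Sum.inr true}, ?_, ?_⟩
  · -- A = closure span (f '' S)
    rw [hbbf]
    apply le_antisymm
    · intro x hx
      have hc : x - ⟪b₀, x⟫_ℂ • b₀ ∈ A ⊓ B := hdecA x hx
      have hc1 : x - ⟪b₀, x⟫_ℂ • b₀ ∈
          (Submodule.span ℂ (Set.range fC)).topologicalClosure := by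
        rw [closure_span_range_subtype (A ⊓ B) hCc bC]
        exact hc
      have hmono : (Submodule.span ℂ (Set.range fC)).topologicalClosure ≤
          (Submodule.span ℂ (f '' ((Sum.inl ∘ Sum.inl) '' Set.univ ∪ {Sum.inr false}))).topologicalClosure := by
        apply Submodule.topologicalClosure_mono
        apply Submodule.span_mono
        rintro _ ⟨i, rfl⟩
        exact ⟨Sum.inl (Sum.inl i), Or.inl ⟨i, trivial, rfl⟩, rfl⟩
      have hb₀mem : b₀ ∈
          (Submodule.span ℂ (f '' ((Sum.inl ∘ Sum.inl) '' Set.univ ∪ {Sum.inr false}))).topologicalClosure := by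
        refine Submodule.le_topologicalClosure _ (Submodule.subset_span ?_)
        exact ⟨Sum.inr false, Or.inr rfl, rfl⟩
      have := Submodule.add_mem _ (hmono hc1) (Submodule.smul_mem _ ⟪b₀, x⟫_ℂ hb₀mem)
      rwa [sub_add_cancel] at this
    · refine Submodule.topologicalClosure_minimal _ (Submodule.span_le.mpr ?_) hAc
      rintro _ ⟨y, hy, rfl⟩
      rcases hy with ⟨i, -, rfl⟩ | hy
      · exact (hfC_mem i).1
      · rw [Set.mem_singleton_iff] at hy
        rw [hy]
        exact hbA
  · -- B = closure span (f '' T)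
    rw [hbbf]
    apply le_antisymm
    · intro x hx
      have hc : x - ⟪a, x⟫_ℂ • a ∈ A ⊓ B := hdecB x hx
      have hc1 : x - ⟪a, x⟫_ℂ • a ∈
          (Submodule.span ℂ (Set.range fC)).topologicalClosure := by
        rw [closure_span_range_subtype (A ⊓ B) hCc bC]
        exact hc
      have hmono : (Submodule.span ℂ (Set.range fC)).topologicalClosure ≤
          (Submodule.span ℂ (f '' ((Sum.inl ∘ Sum.inl) '' Set.univ ∪ {Sum.inr true}))).topologicalClosure := by
        apply Submodule.topologicalClosure_mono
        apply Submodule.span_mono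
        rintro _ ⟨i, rfl⟩
        exact ⟨Sum.inl (Sum.inl i), Or.inl ⟨i, trivial, rfl⟩, rfl⟩
      have hamem : a ∈
          (Submodule.span ℂ (f '' ((Sum.inl ∘ Sum.inl) '' Set.univ ∪ {Sum.inr true}))).topologicalClosure := by
        refine Submodule.le_topologicalClosure _ (Submodule.subset_span ?_)
        exact ⟨Sum.inr true, Or.inr rfl, rfl⟩
      have := Submodule.add_mem _ (hmono hc1) (Submodule.smul_mem _ ⟪a, x⟫_ℂ hamem)
      rwa [sub_add_cancel] at this
    · refine Submodule.topologicalClosure_minimal _ (Submodule.span_le.mpr ?_) hBc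
      rintro _ ⟨y, hy, rfl⟩
      rcases hy with ⟨i, -, rfl⟩ | hy
      · exact (hfC_mem i).2
      · rw [Set.mem_singleton_iff] at hy
        rw [hy]
        exact haB


/-- closed hyperplanes `A, B` of `X ∈ G_∞(H)` are ortho-adjacent
(compatible with `A ⊓ B` of codimension `1` in each) if and only if the
one-dimensional subspaces `Aᗮ ⊓ X` and `Bᗮ ⊓ X` are orthogonal. -/
theorem stmt12 (hH : ¬ FiniteDimensional ℂ H)
    (X : Submodule ℂ H) (hXc : IsClosed (X : Set H))
    (hXdim : ¬ FiniteDimensional ℂ X) (hXcodim : ¬ FiniteDimensional ℂ Xᗮ)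
    (A B : Submodule ℂ H)
    (hAc : IsClosed (A : Set H)) (hBc : IsClosed (B : Set H))
    (hAX : A ≤ X) (hBX : B ≤ X)
    (hA1 : Module.finrank ℂ (Aᗮ ⊓ X : Submodule ℂ H) = 1)
    (hB1 : Module.finrank ℂ (Bᗮ ⊓ X : Submodule ℂ H) = 1) :
    (Compatible A B ∧
      Module.finrank ℂ ((A ⊓ B)ᗮ ⊓ A : Submodule ℂ H) = 1 ∧
      Module.finrank ℂ ((A ⊓ B)ᗮ ⊓ B : Submodule ℂ H) = 1)
    ↔ (Aᗮ ⊓ X).IsOrtho (Bᗮ ⊓ X) := by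
  constructor
  · rintro ⟨⟨ι, b, S, T, hA_eq, hB_eq⟩, hWA, hWB⟩
    exact fwd X A B hAX hBX hA1 hB1 b S T hA_eq hB_eq hWA hWB
  · intro horth
    exact bwd X A B hXc hAc hBc hAX hBX hA1 hB1 horth
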